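/- Every strictly E_⪰-positive linear functional on E is a moment functional; moreover, for any strictly E_⪰-positive Λ, any point x ∈ X, and any positive semidefinite matrix M ∈ H_q, there exist a finitely atomic representing measure ν of Λ and ε > 0 such that ν({x}) ⪰ εM. -/

import Mathlib

open Matrix MeasureTheory ComplexOrder

/-- A positive `H_q`-valued measure on `(X, 𝔛)`, given by its trace measure `τ` together with a
measurable, pointwise positive semidefinite Radon–Nikodym matrix `Φ`. -/
structure MatMeasure (X : Type*) [MeasurableSpace X] (q : ℕ) where
  τ : Measure X
  Φ : X → Matrix (Fin q) (Fin q) ℂ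
  measurable_entry : ∀ i j, Measurable fun x => Φ x i j
  posSemidef : ∀ x, (Φ x).PosSemidef

/-- `μ` is a representing measure for the functional `Λ` on `E`:
every `F ∈ E` is `μ`-integrable and `Λ(F) = ∫ ⟨F, dμ⟩ = ∫ ⟨F, Φ⟩ dτ`. -/
def Represents {X : Type*} [MeasurableSpace X] {q : ℕ}
    (E : Submodule ℝ (X → Matrix (Fin q) (Fin q) ℂ)) (Λ : E →ₗ[ℝ] ℝ)
    (μ : MatMeasure X q) : Prop :=
  (∀ F : E, Integrable
      (fun x => (((F : X → Matrix (Fin q) (Fin q) ℂ) x * μ.Φ x).trace).re) μ.τ) ∧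
  ∀ F : E, Λ F = ∫ x, (((F : X → Matrix (Fin q) (Fin q) ℂ) x * μ.Φ x).trace).re ∂μ.τ

section Stmt15Aux
variable {q : ℕ}

lemma stmt15_psd_smul {A : Matrix (Fin q) (Fin q) ℂ} (hA : A.PosSemidef) {c : ℝ} (hc : 0 ≤ c) :
    (c • A).PosSemidef := by
  refine .of_dotProduct_mulVec_nonneg ?_ ?_
  · unfold Matrix.IsHermitian
    rw [conjTranspose_smul, star_trivial, hA.1.eq]
  · intro x
    rw [smul_mulVec, dotProduct_smul]
    have h0 : (0:ℂ) ≤ star x ⬝ᵥ A *ᵥ x := hA.dotProduct_mulVec_nonneg x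
    rw [Complex.real_smul]
    exact mul_nonneg (by exact_mod_cast Complex.real_le_real.mpr hc) h0

lemma stmt15_herm_entry {H : Matrix (Fin q) (Fin q) ℂ} (hH : H.IsHermitian) (i j : Fin q) :
    (starRingEnd ℂ) (H i j) = H j i := by
  rw [starRingEnd_apply, ← conjTranspose_apply, hH.eq]

lemma stmt15_herm_quad_real {H : Matrix (Fin q) (Fin q) ℂ} (hH : H.IsHermitian)
    (v : Fin q → ℂ) : (star v ⬝ᵥ H *ᵥ v).im = 0 := by
  have h : (starRingEnd ℂ) (star v ⬝ᵥ H *ᵥ v) = star v ⬝ᵥ H *ᵥ v := by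
    simp only [dotProduct, mulVec, Pi.star_apply, map_sum, _root_.map_mul, Finset.mul_sum]
    rw [Finset.sum_comm]
    refine Finset.sum_congr rfl fun i _ => Finset.sum_congr rfl fun j _ => ?_
    rw [stmt15_herm_entry hH j i]
    simp only [starRingEnd_apply, star_star]
    ring
  exact Complex.conj_eq_iff_im.mp h

lemma stmt15_trace_quad (H : Matrix (Fin q) (Fin q) ℂ) (v : Fin q → ℂ) :
    (H * vecMulVec v (star v)).trace = star v ⬝ᵥ H *ᵥ v := by
  simp only [Matrix.trace, Matrix.diag, Matrix.mul_apply, vecMulVec_apply, dotProduct,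
    mulVec, Pi.star_apply, Finset.mul_sum]
  exact Finset.sum_congr rfl fun i _ => Finset.sum_congr rfl fun j _ => by ring

lemma stmt15_psd_vecMulVec (v : Fin q → ℂ) : (vecMulVec v (star v)).PosSemidef := by
  refine .of_dotProduct_mulVec_nonneg ?_ ?_
  · ext i j
    simp only [conjTranspose_apply, vecMulVec_apply, Pi.star_apply, star_mul', star_star]
    exact mul_comm _ _
  · intro x
    have key : star x ⬝ᵥ (vecMulVec v (star v)) *ᵥ x = (star x ⬝ᵥ v) * star (star x ⬝ᵥ v) := by
      simp only [dotProduct, mulVec, vecMulVec_apply, Pi.star_apply, Finset.mul_sum,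
        star_sum, Finset.sum_mul, star_mul', star_star]
      rw [Finset.sum_comm]
      exact Finset.sum_congr rfl fun i _ => Finset.sum_congr rfl fun j _ => by ring
    rw [key]
    exact mul_star_self_nonneg _

lemma stmt15_psd_of_trace {H : Matrix (Fin q) (Fin q) ℂ} (hH : H.IsHermitian)
    (h : ∀ A : Matrix (Fin q) (Fin q) ℂ, A.PosSemidef → 0 ≤ ((H * A).trace).re) :
    H.PosSemidef := by
  refine .of_dotProduct_mulVec_nonneg hH fun v => ?_
  rw [Complex.nonneg_iff]
  refine ⟨?_, (stmt15_herm_quad_real hH v).symm⟩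
  have := h _ (stmt15_psd_vecMulVec v)
  rwa [stmt15_trace_quad] at this

lemma stmt15_psd_sum {ι : Type*} (s : Finset ι) (f : ι → Matrix (Fin q) (Fin q) ℂ)
    (h : ∀ i ∈ s, (f i).PosSemidef) : (∑ i ∈ s, f i).PosSemidef :=
  Finset.sum_induction f _ (fun _ _ ha hb => ha.add hb) Matrix.PosSemidef.zero h

end Stmt15Aux


open RealInnerProductSpace in
lemma stmt15_core {V : Type*} [NormedAddCommGroup V] [InnerProductSpace ℝ V]
    [FiniteDimensional ℝ V] (gen : Set V)
    (hsmul : ∀ (c : ℝ), 0 ≤ c → ∀ g ∈ gen, c • g ∈ gen)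
    (Λv g₀ : V) (hg₀ : g₀ ∈ gen)
    (δ : ℝ) (hδ : 0 < δ)
    (hpos : ∀ y : V, (∀ g ∈ gen, 0 ≤ ⟪g, y⟫) → δ * ‖y‖ ≤ ⟪Λv, y⟫) :
    ∃ ε : ℝ, 0 < ε ∧ ∃ (k : ℕ) (f : Fin k → V),
      (∀ j, f j ∈ gen) ∧ ∑ j, f j = Λv - ε • g₀ := by
  classical
  set C : Set (V) := {v | ∃ (k : ℕ) (f : Fin k → V), (∀ j, f j ∈ gen) ∧ ∑ j, f j = v} with hCdef
  have hC0 : (0 : V) ∈ C := ⟨0, Fin.elim0, fun j => j.elim0, by simp⟩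
  have hCadd : ∀ a ∈ C, ∀ b ∈ C, a + b ∈ C := by
    rintro a ⟨k, f, hf, rfl⟩ b ⟨m, g, hg, rfl⟩
    refine ⟨k + m, Fin.append f g, ?_, ?_⟩
    · intro j
      refine Fin.addCases (motive := fun j => Fin.append f g j ∈ gen) ?_ ?_ j
      · intro i; rw [Fin.append_left]; exact hf i
      · intro i; rw [Fin.append_right]; exact hg i
    · rw [Fin.sum_univ_add]
      simp [Fin.append_left, Fin.append_right]
  have hCsmul : ∀ (c : ℝ), 0 ≤ c → ∀ a ∈ C, c • a ∈ C := by
    rintro c hc a ⟨k, f, hf, rfl⟩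
    exact ⟨k, fun j => c • f j, fun j => hsmul c hc _ (hf j), by rw [Finset.smul_sum]⟩
  have hgenC : gen ⊆ C := fun g hg => ⟨1, fun _ => g, fun _ => hg, by simp⟩
  set Ccone : ConvexCone ℝ (V) :=
    ⟨C, fun c hc a ha => hCsmul c hc.le a ha, fun a ha b hb => hCadd a ha b hb⟩ with hCcone
  have hCconv : Convex ℝ C := Ccone.convex
  -- ball around Λv inside closure C
  have hball : Metric.ball Λv δ ⊆ closure C := by
    intro w hw
    by_contra hwn
    have hwn' : w ∉ Ccone.closure := by rwa [ConvexCone.mem_closure]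
    obtain ⟨y, hy1, hy2⟩ :=
      ProperCone.hyperplane_separation' (x₀ := w)
        (⟨(Ccone.closure).toPointedCone (subset_closure hC0),
          (by exact isClosed_closure)⟩ : ProperCone ℝ V) hwn'
    have hyne : y ≠ 0 := by
      rintro rfl
      simp at hy2
    have hygen : ∀ g ∈ gen, 0 ≤ ⟪g, y⟫ := fun g hg =>
      hy1 g (subset_closure (hgenC hg))
    have h1 : δ * ‖y‖ ≤ ⟪Λv, y⟫ := hpos y hygen
    have h2 : ⟪Λv, y⟫ = ⟪w, y⟫ + ⟪Λv - w, y⟫ := by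
      rw [← inner_add_left, add_sub_cancel]
    have h3 : ⟪w, y⟫ < 0 := hy2
    have h4 : ⟪Λv - w, y⟫ ≤ ‖Λv - w‖ * ‖y‖ := real_inner_le_norm _ _
    have h5 : ‖Λv - w‖ < δ := by
      rw [← dist_eq_norm, dist_comm, ← Metric.mem_ball]; exact hw
    have h6 : ‖Λv - w‖ * ‖y‖ < δ * ‖y‖ :=
      mul_lt_mul_of_pos_right h5 (norm_pos_iff.mpr hyne)
    linarith
  have hint_cl : Λv ∈ interior (closure C) :=
    mem_interior.mpr ⟨Metric.ball Λv δ, hball, Metric.isOpen_ball, Metric.mem_ball_self hδ⟩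
  -- interior of C is nonempty
  have hconv_cl : Convex ℝ (closure C) := hCconv.closure
  have h1 : affineSpan ℝ (closure C) = ⊤ :=
    hconv_cl.interior_nonempty_iff_affineSpan_eq_top.mp ⟨Λv, hint_cl⟩
  have h2 : affineSpan ℝ C = ⊤ := by
    have hclosed : IsClosed ((affineSpan ℝ C : AffineSubspace ℝ (V)) : Set (V)) :=
      (affineSpan ℝ C).closed_of_finiteDimensional
    have hsub : closure C ⊆ (affineSpan ℝ C : Set (V)) :=
      hclosed.closure_subset_iff.mpr (subset_affineSpan ℝ C)
    have : affineSpan ℝ (closure C) ≤ affineSpan ℝ C := affineSpan_le.mpr hsub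
    rw [h1] at this
    exact top_le_iff.mp this
  obtain ⟨z, hz⟩ : (interior C).Nonempty :=
    hCconv.interior_nonempty_iff_affineSpan_eq_top.mpr h2
  -- Λv is in the interior of C
  set u := Λv - z with hu
  set t : ℝ := δ / (2 * (‖u‖ + 1)) with ht
  have hupos : (0:ℝ) < ‖u‖ + 1 := by positivity
  have htpos : 0 < t := by positivity
  have hw : Λv + t • u ∈ closure C := by
    apply hball
    rw [Metric.mem_ball, dist_eq_norm]
    have : Λv + t • u - Λv = t • u := by abel
    rw [this, norm_smul, Real.norm_eq_abs, abs_of_pos htpos]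
    calc t * ‖u‖ ≤ t * (‖u‖ + 1) := by nlinarith
    _ = δ / 2 := by rw [ht]; field_simp
    _ < δ := by linarith
  have hΛint : Λv ∈ interior C := by
    have hseg := hCconv.openSegment_interior_closure_subset_interior hz hw
    apply hseg
    refine ⟨t / (1 + t), 1 / (1 + t), by positivity, by positivity, ?_, ?_⟩
    · field_simp
      ring
    · have h1t : (1 + t) ≠ 0 := by positivity
      rw [hu]
      match_scalars <;> field_simp <;> ring
  -- subtract a small multiple of g₀
  obtain ⟨r, hr, hrball⟩ := Metric.isOpen_iff.mp isOpen_interior Λv hΛint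
  refine ⟨r / (2 * (‖g₀‖ + 1)), by positivity, ?_⟩
  have hmem : Λv - (r / (2 * (‖g₀‖ + 1))) • g₀ ∈ C := by
    apply interior_subset
    apply hrball
    rw [Metric.mem_ball, dist_eq_norm]
    have : Λv - (r / (2 * (‖g₀‖ + 1))) • g₀ - Λv = -((r / (2 * (‖g₀‖ + 1))) • g₀) := by abel
    rw [this, norm_neg, norm_smul, Real.norm_eq_abs]
    have hg0 : (0:ℝ) < ‖g₀‖ + 1 := by positivity
    rw [abs_of_pos (by positivity)]
    calc r / (2 * (‖g₀‖ + 1)) * ‖g₀‖ ≤ r / (2 * (‖g₀‖ + 1)) * (‖g₀‖ + 1) := by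
          apply mul_le_mul_of_nonneg_left (by linarith) (by positivity)
    _ = r / 2 := by field_simp
    _ < r := by linarith
  obtain ⟨k, f, hf, hsum⟩ := hmem
  exact ⟨k, f, hf, hsum⟩

lemma stmt15_measure_of_atoms {X : Type*} [MeasurableSpace X] [MeasurableSingletonClass X]
    [DecidableEq X] {q : ℕ} (E : Submodule ℝ (X → Matrix (Fin q) (Fin q) ℂ))
    (hmeas : ∀ F ∈ E, ∀ i j, Measurable fun x => F x i j)
    (Λ : E →ₗ[ℝ] ℝ) (k : ℕ) (pts : Fin k → X) (Mats : Fin k → Matrix (Fin q) (Fin q) ℂ)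
    (hpsd : ∀ j, (Mats j).PosSemidef)
    (hrep : ∀ F : E, Λ F =
      ∑ j, (((F : X → Matrix (Fin q) (Fin q) ℂ) (pts j) * Mats j).trace).re) :
    ∃ μ : MatMeasure X q, Represents E Λ μ := by
  classical
  set s : Finset X := Finset.image pts Finset.univ with hs
  set Φ : X → Matrix (Fin q) (Fin q) ℂ :=
    fun x => ∑ j ∈ Finset.univ.filter (fun j => pts j = x), Mats j with hΦ
  have hsingle : ∀ (j : Fin k), MeasurableSet {x : X | pts j = x} := by
    intro j
    have : {x : X | pts j = x} = {pts j} := by ext x; simp [eq_comm]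
    rw [this]; exact MeasurableSet.singleton _
  have hΦmeas : ∀ i j, Measurable fun x => Φ x i j := by
    intro i j
    have : (fun x => Φ x i j)
        = fun x => ∑ l : Fin k, if pts l = x then Mats l i j else 0 := by
      funext x
      rw [hΦ]
      simp only [Matrix.sum_apply]
      rw [Finset.sum_filter]
    rw [this]
    exact Finset.measurable_sum _ fun l _ =>
      Measurable.ite (hsingle l) measurable_const measurable_const
  have hΦpsd : ∀ x, (Φ x).PosSemidef := fun x =>
    stmt15_psd_sum _ _ fun j _ => hpsd j
  have hFmeas : ∀ F : E, Measurable fun x =>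
        (((F : X → Matrix (Fin q) (Fin q) ℂ) x * Φ x).trace).re := by
      intro F
      apply Complex.measurable_re.comp
      have : (fun x => ((F : X → Matrix (Fin q) (Fin q) ℂ) x * Φ x).trace)
          = fun x => ∑ i, ∑ l, (F : X → Matrix (Fin q) (Fin q) ℂ) x i l * Φ x l i := by
        funext x; rfl
      rw [this]
      refine Finset.measurable_sum _ fun i _ => Finset.measurable_sum _ fun l _ => ?_
      exact (hmeas F F.2 i l).mul (hΦmeas l i)
  have hint : ∀ (F : E) (x : X), Integrable
        (fun y => (((F : X → Matrix (Fin q) (Fin q) ℂ) y * Φ y).trace).re)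
        (Measure.dirac x) := by
      intro F x
      refine ⟨(hFmeas F).aestronglyMeasurable, ?_⟩
      rw [HasFiniteIntegral, lintegral_dirac]
      exact ENNReal.coe_lt_top
  refine ⟨⟨∑ x ∈ s, Measure.dirac x, Φ, hΦmeas, hΦpsd⟩,
    fun F => integrable_finset_sum_measure.mpr fun x _ => hint F x, fun F => ?_⟩
  dsimp only
  rw [integral_finset_sum_measure (fun x _ => hint F x)]
  have hdirac : ∀ x ∈ s, (∫ y, (((F : X → Matrix (Fin q) (Fin q) ℂ) y * Φ y).trace).re
      ∂Measure.dirac x) = (((F : X → Matrix (Fin q) (Fin q) ℂ) x * Φ x).trace).re :=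
    fun x _ => integral_dirac _ x
  rw [Finset.sum_congr rfl hdirac, hrep F]
  rw [← Finset.sum_fiberwise_of_maps_to (fun j _ => Finset.mem_image_of_mem pts (Finset.mem_univ j))
    (fun j => (((F : X → Matrix (Fin q) (Fin q) ℂ) (pts j) * Mats j).trace).re)]
  refine Finset.sum_congr rfl fun x hx => ?_
  rw [hΦ]
  rw [Matrix.mul_sum, Matrix.trace_sum, Complex.re_sum]
  refine Finset.sum_congr rfl fun j hj => ?_
  rw [(Finset.mem_filter.mp hj).2]

-- expansion lemma
lemma stmt15_expand {X : Type*} {q n : ℕ} {E : Submodule ℝ (X → Matrix (Fin q) (Fin q) ℂ)}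
    (G : Fin n → E) (y : Fin n → ℝ) (x : X) (A : Matrix (Fin q) (Fin q) ℂ) :
    ((((∑ i, y i • G i : E) : X → Matrix (Fin q) (Fin q) ℂ) x) * A).trace.re
      = ∑ i, y i * ((((G i : X → Matrix (Fin q) (Fin q) ℂ) x) * A).trace.re) := by
  have hcoe : ((∑ i, y i • G i : E) : X → Matrix (Fin q) (Fin q) ℂ)
      = ∑ i, y i • ((G i : E) : X → Matrix (Fin q) (Fin q) ℂ) := by
    push_cast
    rfl
  rw [hcoe, Finset.sum_apply]
  simp only [Pi.smul_apply]
  rw [Finset.sum_mul, Matrix.trace_sum, Complex.re_sum]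
  refine Finset.sum_congr rfl fun i _ => ?_
  rw [Matrix.smul_mul, Matrix.trace_smul, Complex.smul_re, smul_eq_mul]

lemma stmt15_lam_expand {X : Type*} {q n : ℕ} {E : Submodule ℝ (X → Matrix (Fin q) (Fin q) ℂ)}
    (Λ : E →ₗ[ℝ] ℝ) (G : Fin n → E) (y : Fin n → ℝ) :
    Λ (∑ i, y i • G i) = ∑ i, y i * Λ (G i) := by
  rw [map_sum]
  exact Finset.sum_congr rfl fun i _ => by rw [_root_.map_smul, smul_eq_mul]

open RealInnerProductSpace in
lemma stmt15_atoms {X : Type*} [DecidableEq X] {q : ℕ}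
    (E : Submodule ℝ (X → Matrix (Fin q) (Fin q) ℂ)) [FiniteDimensional ℝ E]
    (hherm : ∀ F ∈ E, ∀ x, (F x).IsHermitian)
    (Λ : E →ₗ[ℝ] ℝ)
    (hstrict : ∀ F : E, F ≠ 0 →
      (∀ x, ((F : X → Matrix (Fin q) (Fin q) ℂ) x).PosSemidef) → 0 < Λ F)
    (x₀ : X) (M : Matrix (Fin q) (Fin q) ℂ) (hM : M.PosSemidef) :
    ∃ (k : ℕ) (pts : Fin k → X) (Mats : Fin k → Matrix (Fin q) (Fin q) ℂ) (ε : ℝ),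
      0 < ε ∧ (∀ j, (Mats j).PosSemidef) ∧
      (∀ F : E, Λ F =
        ∑ j, (((F : X → Matrix (Fin q) (Fin q) ℂ) (pts j) * Mats j).trace).re) ∧
      ((∑ j ∈ Finset.univ.filter fun j => pts j = x₀, Mats j) - ε • M).PosSemidef := by
  classical
  set n := Module.finrank ℝ E with hn
  set b : Module.Basis (Fin n) ℝ E := Module.finBasis ℝ E with hb
  set ℓv : X → Matrix (Fin q) (Fin q) ℂ → (Fin n → ℝ) :=
    fun x A i => ((((b i : E) : X → Matrix (Fin q) (Fin q) ℂ) x * A).trace).re with hℓv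
  set vec : X → Matrix (Fin q) (Fin q) ℂ → EuclideanSpace ℝ (Fin n) :=
    fun x A => (WithLp.equiv 2 (Fin n → ℝ)).symm (ℓv x A) with hvec
  set Λv : EuclideanSpace ℝ (Fin n) :=
    (WithLp.equiv 2 (Fin n → ℝ)).symm (fun i => Λ (b i)) with hΛv
  set gen : Set (EuclideanSpace ℝ (Fin n)) :=
    {v | ∃ x A, A.PosSemidef ∧ v = vec x A} with hgen
  set eqv : EuclideanSpace ℝ (Fin n) ≃ₗ[ℝ] (Fin n → ℝ) :=
    WithLp.linearEquiv 2 ℝ (Fin n → ℝ) with heqv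
  set Ψ : EuclideanSpace ℝ (Fin n) →ₗ[ℝ] E :=
    (b.equivFun.symm.toLinearMap).comp eqv.toLinearMap with hΨ
  have hΨy : ∀ y : EuclideanSpace ℝ (Fin n), Ψ y = ∑ i, y i • b i := by
    intro y
    simp only [hΨ, LinearMap.comp_apply, LinearEquiv.coe_coe, Module.Basis.equivFun_symm_apply]
    rfl
  have hΨinj : Function.Injective Ψ := by
    rw [hΨ]
    exact b.equivFun.symm.injective.comp eqv.injective
  -- inner product with a generator
  have hinner : ∀ (x : X) (A : Matrix (Fin q) (Fin q) ℂ) (y : EuclideanSpace ℝ (Fin n)),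
      ⟪vec x A, y⟫ = (((Ψ y : X → Matrix (Fin q) (Fin q) ℂ) x * A).trace).re := by
    intro x A y
    rw [hΨy, stmt15_expand]
    rw [PiLp.inner_apply]
    simp only [RCLike.inner_apply, conj_trivial]
    refine Finset.sum_congr rfl fun i _ => ?_
    simp only [hvec, WithLp.equiv_symm_apply, PiLp.toLp_apply]
    ring
  have hinnerΛ : ∀ y : EuclideanSpace ℝ (Fin n), ⟪Λv, y⟫ = Λ (Ψ y) := by
    intro y
    rw [hΨy, stmt15_lam_expand, hΛv, PiLp.inner_apply]
    simp only [RCLike.inner_apply, conj_trivial]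
    refine Finset.sum_congr rfl fun i _ => ?_
    simp only [WithLp.equiv_symm_apply, PiLp.toLp_apply]
  -- smul stability of gen
  have hsmulvec : ∀ (c : ℝ) (x : X) (A : Matrix (Fin q) (Fin q) ℂ),
      c • vec x A = vec x (c • A) := by
    intro c x A
    rw [hvec]
    dsimp only
    rw [WithLp.equiv_symm_apply, ← WithLp.toLp_smul]
    congr 1
    funext i
    simp only [hℓv, Pi.smul_apply, Matrix.mul_smul, Matrix.trace_smul, Complex.smul_re,
      smul_eq_mul]
  have hsmulgen : ∀ (c : ℝ), 0 ≤ c → ∀ g ∈ gen, c • g ∈ gen := by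
    rintro c hc g ⟨x, A, hA, rfl⟩
    exact ⟨x, c • A, stmt15_psd_smul hA hc, hsmulvec c x A⟩
  -- coercion of scalar multiples in E
  have hcoesmul : ∀ (c : ℝ) (F : E) (x : X),
      ((c • F : E) : X → Matrix (Fin q) (Fin q) ℂ) x = c • (F : X → Matrix (Fin q) (Fin q) ℂ) x := by
    intro c F x
    rfl
  -- the positivity property Q
  set Q : E → Prop := fun F => ∀ x, ((F : X → Matrix (Fin q) (Fin q) ℂ) x).PosSemidef with hQ
  have hQsmul : ∀ (c : ℝ), 0 ≤ c → ∀ F : E, Q F → Q (c • F) := by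
    intro c hc F hF x
    rw [hcoesmul]
    exact stmt15_psd_smul (hF x) hc
  have hQiff : ∀ F : E, Q F ↔ ∀ (x : X) (v : Fin q → ℂ),
      0 ≤ (star v ⬝ᵥ ((F : X → Matrix (Fin q) (Fin q) ℂ) x) *ᵥ v).re := by
    intro F
    constructor
    · intro h x v
      exact (Complex.nonneg_iff.mp ((h x).dotProduct_mulVec_nonneg v)).1
    · intro h x
      exact .of_dotProduct_mulVec_nonneg (hherm _ F.2 x) fun v => Complex.nonneg_iff.mpr
        ⟨h x v, (stmt15_herm_quad_real (hherm _ F.2 x) v).symm⟩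
  set K : Set (EuclideanSpace ℝ (Fin n)) := {y | ‖y‖ = 1 ∧ Q (Ψ y)} with hK
  have hcont1 : Continuous fun y : EuclideanSpace ℝ (Fin n) =>
      ((Ψ y : E) : X → Matrix (Fin q) (Fin q) ℂ) :=
    continuous_subtype_val.comp Ψ.continuous_of_finiteDimensional
  have hcont2 : ∀ (x : X) (i j : Fin q), Continuous fun y : EuclideanSpace ℝ (Fin n) =>
      ((Ψ y : X → Matrix (Fin q) (Fin q) ℂ) x) i j := fun x i j =>
    ((continuous_apply x).comp hcont1).matrix_elem i j
  have hcont3 : ∀ (x : X) (v : Fin q → ℂ), Continuous fun y : EuclideanSpace ℝ (Fin n) =>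
      (star v ⬝ᵥ ((Ψ y : X → Matrix (Fin q) (Fin q) ℂ) x) *ᵥ v).re := by
    intro x v
    apply Complex.continuous_re.comp
    have hrfl : (fun y : EuclideanSpace ℝ (Fin n) =>
        star v ⬝ᵥ ((Ψ y : X → Matrix (Fin q) (Fin q) ℂ) x) *ᵥ v)
        = fun y => ∑ i, star (v i) * ∑ j, ((Ψ y : X → Matrix (Fin q) (Fin q) ℂ) x) i j * v j :=
      rfl
    rw [hrfl]
    exact continuous_finset_sum _ fun i _ => continuous_const.mul
      (continuous_finset_sum _ fun j _ => (hcont2 x i j).mul continuous_const)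
  have hKclosed : IsClosed K := by
    have hKeq : K = {y : EuclideanSpace ℝ (Fin n) | ‖y‖ = 1} ∩
        ⋂ (x : X), ⋂ (v : Fin q → ℂ),
          {y | 0 ≤ (star v ⬝ᵥ ((Ψ y : X → Matrix (Fin q) (Fin q) ℂ) x) *ᵥ v).re} := by
      ext y
      simp only [hK, Set.mem_setOf_eq, Set.mem_inter_iff, Set.mem_iInter, hQiff]
    rw [hKeq]
    exact IsClosed.inter (isClosed_eq continuous_norm continuous_const)
      (isClosed_iInter fun x => isClosed_iInter fun v =>
        isClosed_le continuous_const (hcont3 x v))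
  have hKcpt : IsCompact K :=
    (isCompact_closedBall (0 : EuclideanSpace ℝ (Fin n)) 1).of_isClosed_subset hKclosed
      (fun y hy => mem_closedBall_zero_iff.mpr hy.1.le)
  have hKscale : ∀ y : EuclideanSpace ℝ (Fin n), y ≠ 0 → Q (Ψ y) → (‖y‖⁻¹ • y) ∈ K := by
    intro y hy hQy
    refine ⟨?_, ?_⟩
    · rw [norm_smul, norm_inv, norm_norm, inv_mul_cancel₀ (norm_ne_zero_iff.mpr hy)]
    · rw [_root_.map_smul]
      exact hQsmul _ (by positivity) _ hQy
  have hδex : ∃ δ : ℝ, 0 < δ ∧ ∀ y, Q (Ψ y) → δ * ‖y‖ ≤ Λ (Ψ y) := by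
    have hgen' : ∀ δ : ℝ, (∀ y ∈ K, Λ (Ψ y) ≥ δ) → ∀ y, Q (Ψ y) → δ * ‖y‖ ≤ Λ (Ψ y) := by
      intro δ hδK y hQy
      by_cases hy : y = 0
      · subst hy
        simp
      · have hKm := hδK _ (hKscale y hy hQy)
        rw [_root_.map_smul, _root_.map_smul, smul_eq_mul] at hKm
        have hny : 0 < ‖y‖ := norm_pos_iff.mpr hy
        have := mul_le_mul_of_nonneg_right hKm.le hny.le
        calc δ * ‖y‖ ≤ ‖y‖⁻¹ * Λ (Ψ y) * ‖y‖ := this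
        _ = Λ (Ψ y) := by field_simp
    by_cases hKe : K.Nonempty
    · obtain ⟨y₀, hy₀K, hmin⟩ := hKcpt.exists_isMinOn hKe
        ((Λ.continuous_of_finiteDimensional.comp
          Ψ.continuous_of_finiteDimensional).continuousOn)
      refine ⟨Λ (Ψ y₀), ?_, hgen' _ (fun y hy => isMinOn_iff.mp hmin y hy)⟩
      refine hstrict _ ?_ hy₀K.2
      intro h0
      have hy0 : y₀ = 0 := by
        apply hΨinj
        rw [h0, map_zero]
      have h1 := hy₀K.1
      rw [hy0, norm_zero] at h1
      exact zero_ne_one h1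
    · exact ⟨1, one_pos, hgen' 1 (fun y hy => absurd ⟨y, hy⟩ hKe)⟩
  obtain ⟨δ, hδpos, hδbound⟩ := hδex
  have hposcore : ∀ y : EuclideanSpace ℝ (Fin n),
      (∀ g ∈ gen, 0 ≤ ⟪g, y⟫) → δ * ‖y‖ ≤ ⟪Λv, y⟫ := by
    intro y hy
    rw [hinnerΛ]
    apply hδbound
    intro x
    apply stmt15_psd_of_trace (hherm _ (Ψ y).2 x)
    intro A hA
    have := hy (vec x A) ⟨x, A, hA, rfl⟩
    rwa [hinner] at this
  obtain ⟨ε, hε, k, f, hf, hsum⟩ :=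
    stmt15_core gen hsmulgen Λv (vec x₀ M) ⟨x₀, M, hM, rfl⟩ δ hδpos hposcore
  choose xs As hAs hfs using hf
  have heqvapp : ∀ (g : Fin n → ℝ), eqv ((WithLp.equiv 2 (Fin n → ℝ)).symm g) = g := by
    intro g
    rw [heqv]
    exact (WithLp.equiv 2 (Fin n → ℝ)).apply_symm_apply g
  have hcomp : ∀ i : Fin n, (∑ j : Fin k, ℓv (xs j) (As j) i) = Λ (b i) - ε * ℓv x₀ M i := by
    intro i
    have h2 := congrArg eqv hsum
    rw [map_sum, map_sub, _root_.map_smul] at h2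
    have h4 : ∀ j, eqv (f j) = ℓv (xs j) (As j) := by
      intro j
      rw [hfs j, hvec]
      exact heqvapp _
    have h5 : eqv Λv = fun i => Λ (b i) := heqvapp _
    have h6 : eqv (vec x₀ M) = ℓv x₀ M := heqvapp _
    rw [Finset.sum_congr rfl (fun j _ => h4 j), h5, h6] at h2
    have h3 := congrFun h2 i
    simp only [Finset.sum_apply, Pi.sub_apply, Pi.smul_apply, smul_eq_mul] at h3
    exact h3
  have hεℓ : ∀ i, ℓv x₀ (ε • M) i = ε * ℓv x₀ M i := by
    intro i
    simp only [hℓv, Matrix.mul_smul, Matrix.trace_smul, Complex.smul_re, smul_eq_mul]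
  set pts' : Fin (k+1) → X := Fin.snoc xs x₀ with hpts'
  set Ms' : Fin (k+1) → Matrix (Fin q) (Fin q) ℂ := Fin.snoc As (ε • M) with hMs'
  have hsnoc_sum : ∀ i : Fin n, Λ (b i)
      = ∑ j : Fin (k+1), ℓv (pts' j) (Ms' j) i := by
    intro i
    rw [Fin.sum_univ_castSucc]
    simp only [hpts', hMs', Fin.snoc_castSucc, Fin.snoc_last]
    rw [hεℓ i, hcomp i]
    ring
  refine ⟨k + 1, pts', Ms', ε, hε, ?_, ?_, ?_⟩
  · intro j
    refine Fin.lastCases ?_ ?_ j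
    · rw [hMs', Fin.snoc_last]
      exact stmt15_psd_smul hM hε.le
    · intro i
      rw [hMs', Fin.snoc_castSucc]
      exact hAs i
  · intro F
    have hR : ∀ (j : Fin (k+1)),
        (((F : X → Matrix (Fin q) (Fin q) ℂ) (pts' j) * Ms' j).trace).re
        = ∑ i, b.equivFun F i * ℓv (pts' j) (Ms' j) i := by
      intro j
      conv_lhs => rw [← b.sum_equivFun F]
      exact stmt15_expand b (b.equivFun F) _ _
    calc Λ F = Λ (∑ i, b.equivFun F i • b i) := by rw [b.sum_equivFun F]
      _ = ∑ i, b.equivFun F i * Λ (b i) := stmt15_lam_expand Λ b (b.equivFun F)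
      _ = ∑ i, b.equivFun F i *
          ∑ j : Fin (k+1), ℓv (pts' j) (Ms' j) i := by
          exact Finset.sum_congr rfl fun i _ => by rw [← hsnoc_sum i]
      _ = ∑ i, ∑ j : Fin (k+1),
          b.equivFun F i * ℓv (pts' j) (Ms' j) i := by
          exact Finset.sum_congr rfl fun i _ => Finset.mul_sum _ _ _
      _ = ∑ j : Fin (k+1), ∑ i,
          b.equivFun F i * ℓv (pts' j) (Ms' j) i := by
          exact Finset.sum_comm
      _ = ∑ j : Fin (k+1),
          (((F : X → Matrix (Fin q) (Fin q) ℂ) (pts' j) * Ms' j).trace).re := by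
          exact Finset.sum_congr rfl fun j _ => (hR j).symm
  · have hfilter : (∑ j ∈ Finset.univ.filter fun j => pts' j = x₀, Ms' j)
        = (∑ j : Fin k, if xs j = x₀ then As j else 0) + ε • M := by
      rw [Finset.sum_filter, Fin.sum_univ_castSucc]
      simp only [hpts', hMs', Fin.snoc_castSucc, Fin.snoc_last, if_pos]
    rw [hfilter, add_sub_cancel_right]
    apply stmt15_psd_sum
    intro j _
    by_cases h : xs j = x₀
    · rw [if_pos h]
      exact hAs j
    · rw [if_neg h]
      exact Matrix.PosSemidef.zero

/-- Every strictly `E_⪰`-positive linear functional `Λ` on `E` is a moment functional; moreover,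
for any point `x₀ ∈ X` and any positive semidefinite `M`, there are a finitely atomic
representing measure `ν = Σ_j Mats_j δ_{pts_j}` of `Λ` and `ε > 0` with `ν({x₀}) ⪰ ε M`. -/
theorem stmt_15 {X : Type*} [MeasurableSpace X] [MeasurableSingletonClass X] [DecidableEq X]
    {q : ℕ} (E : Submodule ℝ (X → Matrix (Fin q) (Fin q) ℂ)) [FiniteDimensional ℝ E]
    (hmeas : ∀ F ∈ E, ∀ i j, Measurable fun x => F x i j)
    (hherm : ∀ F ∈ E, ∀ x, (F x).IsHermitian)
    (Λ : E →ₗ[ℝ] ℝ)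
    (hstrict : ∀ F : E, F ≠ 0 →
      (∀ x, ((F : X → Matrix (Fin q) (Fin q) ℂ) x).PosSemidef) → 0 < Λ F)
    (x₀ : X) (M : Matrix (Fin q) (Fin q) ℂ) (hM : M.PosSemidef) :
    (∃ μ : MatMeasure X q, Represents E Λ μ) ∧
    ∃ (k : ℕ) (pts : Fin k → X) (Mats : Fin k → Matrix (Fin q) (Fin q) ℂ) (ε : ℝ),
      0 < ε ∧ (∀ j, (Mats j).PosSemidef) ∧
      (∀ F : E, Λ F =
        ∑ j, (((F : X → Matrix (Fin q) (Fin q) ℂ) (pts j) * Mats j).trace).re) ∧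
      ((∑ j ∈ Finset.univ.filter fun j => pts j = x₀, Mats j) - ε • M).PosSemidef := by
  obtain ⟨k, pts, Mats, ε, hε, hpsd, hrep, hfil⟩ := stmt15_atoms E hherm Λ hstrict x₀ M hM
  exact ⟨stmt15_measure_of_atoms E hmeas Λ k pts Mats hpsd hrep,
    k, pts, Mats, ε, hε, hpsd, hrep, hfil⟩
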